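/- Let H be a real Hilbert space and let a, b ∈ H be nonzero with ⟨a, -c⟩ ≥ θ‖a‖‖c‖ for θ = (L₁-|L₂+L₃|)/(L₁+|L₂+L₃|) > 0 and ⟨b, -c⟩ ≥ 0 for some nonzero c ∈ H. Then ⟨a, b⟩ ≥ -sin(arccos θ)·‖a‖‖b‖; in particular with θ as above, ⟨a, b⟩ ≥ -(2√(L₁|L₂+L₃|)/(L₁+|L₂+L₃|))‖a‖‖b‖. -/

import Mathlib

lemma inner_ge_aux {H : Type*} [NormedAddCommGroup H] [InnerProductSpace ℝ H]
    (θ : ℝ) (hθ0 : 0 ≤ θ) (hθ1 : θ ≤ 1) (u a b : H) (hun : ‖u‖ = 1)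
    (ht : (inner ℝ a u : ℝ) ≥ θ * ‖a‖) (hw : (inner ℝ b u : ℝ) ≥ 0) :
    (inner ℝ a b : ℝ) ≥ -Real.sqrt (1 - θ^2) * ‖a‖ * ‖b‖ := by
  have ha0 : (0:ℝ) ≤ ‖a‖ := norm_nonneg a
  have hb0 : (0:ℝ) ≤ ‖b‖ := norm_nonneg b
  have hS0 : 0 ≤ Real.sqrt (1 - θ^2) := Real.sqrt_nonneg _
  have hS2 : (Real.sqrt (1 - θ^2))^2 = 1 - θ^2 := Real.sq_sqrt (by nlinarith)
  have ht0 : (0:ℝ) ≤ (inner ℝ a u : ℝ) := le_trans (by positivity) ht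
  have hA2 : ‖a - (inner ℝ a u : ℝ) • u‖^2 = ‖a‖^2 - (inner ℝ a u : ℝ)^2 := by
    rw [@norm_sub_sq_real, real_inner_smul_right, norm_smul, hun, mul_one,
      Real.norm_eq_abs, sq_abs]
    ring
  have hB2 : ‖b - (inner ℝ b u : ℝ) • u‖^2 = ‖b‖^2 - (inner ℝ b u : ℝ)^2 := by
    rw [@norm_sub_sq_real, real_inner_smul_right, norm_smul, hun, mul_one,
      Real.norm_eq_abs, sq_abs]
    ring
  have hA0 : 0 ≤ ‖a - (inner ℝ a u : ℝ) • u‖ := norm_nonneg _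
  have hB0 : 0 ≤ ‖b - (inner ℝ b u : ℝ) • u‖ := norm_nonneg _
  have hinner : (inner ℝ (a - (inner ℝ a u : ℝ) • u) (b - (inner ℝ b u : ℝ) • u) : ℝ)
      = (inner ℝ a b : ℝ) - (inner ℝ a u : ℝ) * (inner ℝ b u : ℝ) := by
    have huu : (inner ℝ u u : ℝ) = 1 := by
      rw [real_inner_self_eq_norm_sq, hun]; norm_num
    rw [inner_sub_left, inner_sub_right, inner_sub_right,
      real_inner_smul_left, real_inner_smul_left, real_inner_smul_right,
      real_inner_smul_right, huu, real_inner_comm u a, real_inner_comm u b]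
    ring
  have hCS : |(inner ℝ a b : ℝ) - (inner ℝ a u : ℝ) * (inner ℝ b u : ℝ)|
      ≤ ‖a - (inner ℝ a u : ℝ) • u‖ * ‖b - (inner ℝ b u : ℝ) • u‖ := by
    rw [← hinner]; exact abs_real_inner_le_norm _ _
  have hAle : ‖a - (inner ℝ a u : ℝ) • u‖ ≤ Real.sqrt (1 - θ^2) * ‖a‖ := by
    have h1 : ‖a - (inner ℝ a u : ℝ) • u‖^2 ≤ (Real.sqrt (1 - θ^2) * ‖a‖)^2 := by
      rw [hA2, mul_pow, hS2]
      nlinarith [mul_self_le_mul_self (mul_nonneg hθ0 ha0) ht]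
    have h2 := Real.sqrt_le_sqrt h1
    rwa [Real.sqrt_sq hA0, Real.sqrt_sq (by positivity)] at h2
  have hBle : ‖b - (inner ℝ b u : ℝ) • u‖ ≤ ‖b‖ := by
    have h1 : ‖b - (inner ℝ b u : ℝ) • u‖^2 ≤ ‖b‖^2 := by
      rw [hB2]; nlinarith
    have h2 := Real.sqrt_le_sqrt h1
    rwa [Real.sqrt_sq hB0, Real.sqrt_sq hb0] at h2
  have hAB : ‖a - (inner ℝ a u : ℝ) • u‖ * ‖b - (inner ℝ b u : ℝ) • u‖
      ≤ Real.sqrt (1 - θ^2) * ‖a‖ * ‖b‖ :=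
    mul_le_mul hAle hBle hB0 (by positivity)
  have h1 := neg_le_of_abs_le hCS
  nlinarith [mul_nonneg ht0 hw]

/-- Angle-based lower bound for an inner product: if `⟨a,-c⟩ ≥ θ‖a‖‖c‖` with
`θ = (L₁-|L₂+L₃|)/(L₁+|L₂+L₃|)` and `⟨b,-c⟩ ≥ 0`, then
`⟨a,b⟩ ≥ -sin(arccos θ)‖a‖‖b‖ = -(2√(L₁|L₂+L₃|)/(L₁+|L₂+L₃|))‖a‖‖b‖`. -/
theorem inner_lower_bound_of_angles
    {H : Type*} [NormedAddCommGroup H] [InnerProductSpace ℝ H]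
    (L₁ L₂ L₃ : ℝ) (hL : L₁ > 3 * |L₂ + L₃|) (hL' : 0 < |L₂ + L₃|)
    (θ : ℝ) (hθ : θ = (L₁ - |L₂ + L₃|) / (L₁ + |L₂ + L₃|))
    (a b c : H) (ha : a ≠ 0) (hb : b ≠ 0) (hc : c ≠ 0)
    (hac : (inner ℝ a (-c) : ℝ) ≥ θ * ‖a‖ * ‖c‖)
    (hbc : (inner ℝ b (-c) : ℝ) ≥ 0) :
    (inner ℝ a b : ℝ) ≥ -Real.sin (Real.arccos θ) * ‖a‖ * ‖b‖
      ∧ (inner ℝ a b : ℝ) ≥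
        -(2 * Real.sqrt (L₁ * |L₂ + L₃|) / (L₁ + |L₂ + L₃|)) * ‖a‖ * ‖b‖ := by
  have hs : 0 < |L₂ + L₃| := hL'
  have hLs : 0 < L₁ + |L₂ + L₃| := by nlinarith
  have hθ0 : 0 ≤ θ := by
    rw [hθ]; apply div_nonneg _ hLs.le; nlinarith
  have hθ1 : θ ≤ 1 := by
    rw [hθ, div_le_one hLs]; nlinarith
  have hc0 : (0:ℝ) < ‖c‖ := norm_pos_iff.mpr hc
  have hun : ‖(‖c‖)⁻¹ • (-c)‖ = 1 := by
    rw [norm_smul, norm_inv, norm_norm, norm_neg]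
    field_simp
  have ht : (inner ℝ a ((‖c‖)⁻¹ • (-c)) : ℝ) ≥ θ * ‖a‖ := by
    rw [real_inner_smul_right, ge_iff_le]
    calc θ * ‖a‖ = (‖c‖)⁻¹ * (θ * ‖a‖ * ‖c‖) := by field_simp
      _ ≤ (‖c‖)⁻¹ * (inner ℝ a (-c) : ℝ) :=
          mul_le_mul_of_nonneg_left hac (by positivity)
  have hw : (inner ℝ b ((‖c‖)⁻¹ • (-c)) : ℝ) ≥ 0 := by
    rw [real_inner_smul_right]; positivity
  have main := inner_ge_aux θ hθ0 hθ1 ((‖c‖)⁻¹ • (-c)) a b hun ht hw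
  have hSval : Real.sqrt (1 - θ^2)
      = 2 * Real.sqrt (L₁ * |L₂ + L₃|) / (L₁ + |L₂ + L₃|) := by
    have hq : 1 - θ^2 = (2 * Real.sqrt (L₁ * |L₂ + L₃|) / (L₁ + |L₂ + L₃|))^2 := by
      rw [div_pow, mul_pow, Real.sq_sqrt (by nlinarith)]
      rw [hθ]; field_simp; ring
    rw [hq, Real.sqrt_sq (by positivity)]
  constructor
  · rw [Real.sin_arccos]; exact main
  · rw [← hSval]; exact main
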